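/- Let $\alpha > 0$, $1 = n_1 < n_2 < \dots < n_R$ integers, and suppose the family $(\E[Y_h])_{h}$ admits the expansion $\E[Y_h] = \E[Y_0] + \sum_{k=1}^R c_k h^{\alpha k} + h^{\alpha R}\eta_R(h)$ with $\eta_R(h) \to 0$ as $h \to 0$. With the Richardson–Romberg weights $\w$ (solving the Vandermonde system $V(1, n_2^{-\alpha}, \dots, n_R^{-\alpha})\w = e_1$), one has $\E\left[\sum_{i=1}^R \w_i Y_{h/n_i}\right] = \E[Y_0] + c_R \frac{(-1)^{R-1}}{(\prod_i n_i)^\alpha}\, h^{\alpha R}\,(1 + \eta_{R,\underline{n}}(h))$ where $\eta_{R,\underline{n}}(h) \to 0$ as $h \to 0$ (assuming $c_R \ne 0$). -/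

import Mathlib

open Finset Filter

lemma vand_interp (R : ℕ) (w x : ℕ → ℝ)
    (hw : ∀ k < R, ∑ i ∈ range R, w i * x i ^ k = if k = 0 then 1 else 0)
    (q : Polynomial ℝ) (hq : q.natDegree < R) :
    ∑ i ∈ range R, w i * q.eval (x i) = q.coeff 0 := by
  have hR : 0 < R := lt_of_le_of_lt (Nat.zero_le _) hq
  calc ∑ i ∈ range R, w i * q.eval (x i)
      = ∑ i ∈ range R, ∑ k ∈ range R, q.coeff k * (w i * x i ^ k) := by
        refine Finset.sum_congr rfl fun i _ => ?_
        rw [Polynomial.eval_eq_sum_range' hq, Finset.mul_sum]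
        exact Finset.sum_congr rfl fun k _ => by ring
    _ = ∑ k ∈ range R, q.coeff k * ∑ i ∈ range R, w i * x i ^ k := by
        rw [Finset.sum_comm]
        exact Finset.sum_congr rfl fun k _ => by rw [Finset.mul_sum]
    _ = q.coeff 0 := by
        rw [Finset.sum_congr rfl fun k hk => by rw [hw k (Finset.mem_range.mp hk)]]
        simp only [mul_ite, mul_one, mul_zero]
        rw [Finset.sum_ite_eq' (range R) 0 (fun k => q.coeff k)]
        simp [hR]

lemma vand_powR (R : ℕ) (hR : 1 ≤ R) (w x : ℕ → ℝ)
    (hw : ∀ k < R, ∑ i ∈ range R, w i * x i ^ k = if k = 0 then 1 else 0) :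
    ∑ i ∈ range R, w i * x i ^ R = (-1 : ℝ) ^ (R - 1) * ∏ i ∈ range R, x i := by
  set p : Polynomial ℝ := ∏ j ∈ range R, (Polynomial.X - Polynomial.C (x j)) with hp
  have hpm : p.Monic := Polynomial.monic_prod_of_monic _ _ fun j _ => Polynomial.monic_X_sub_C _
  have hpd : p.natDegree = R := by
    rw [hp, Polynomial.natDegree_prod _ _ fun j _ => Polynomial.X_sub_C_ne_zero (x j)]
    simp
  set q : Polynomial ℝ := Polynomial.X ^ R - p with hq
  have hqd : q.natDegree < R := by
    rcases eq_or_ne q 0 with h0 | h0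
    · rw [h0]; simpa using (show 0 < R by omega)
    · rw [Polynomial.natDegree_lt_iff_degree_lt h0]
      have hd : (Polynomial.X ^ R : Polynomial ℝ).degree = p.degree := by
        rw [Polynomial.degree_X_pow, Polynomial.degree_eq_natDegree hpm.ne_zero, hpd]
      have := Polynomial.degree_sub_lt hd (pow_ne_zero _ Polynomial.X_ne_zero) (by
        rw [Polynomial.leadingCoeff_X_pow, hpm.leadingCoeff])
      rwa [Polynomial.degree_X_pow] at this
  have h1 := vand_interp R w x hw q hqd
  have h2 : ∀ i ∈ range R, q.eval (x i) = x i ^ R := by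
    intro i hi
    have : p.eval (x i) = 0 := by
      rw [hp, Polynomial.eval_prod]
      exact Finset.prod_eq_zero hi (by simp)
    simp [hq, this]
  rw [Finset.sum_congr rfl fun i hi => by rw [h2 i hi]] at h1
  rw [h1, Polynomial.coeff_zero_eq_eval_zero]
  have hRz : R ≠ 0 := by omega
  have hpe : p.eval 0 = (-1 : ℝ) ^ R * ∏ i ∈ range R, x i := by
    rw [hp, Polynomial.eval_prod]
    rw [Finset.prod_congr rfl fun j _ => show Polynomial.eval 0 (Polynomial.X - Polynomial.C (x j)) = (-1) * x j by simp]
    rw [Finset.prod_mul_distrib, Finset.prod_const, Finset.card_range]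
  rw [hq, Polynomial.eval_sub, Polynomial.eval_pow, Polynomial.eval_X, zero_pow hRz, hpe]
  have hR1 : (-1:ℝ) ^ R = (-1) ^ (R - 1) * (-1) := by
    rw [← pow_succ]
    congr 1
    omega
  rw [hR1]
  ring

/-- Multistep Richardson–Romberg bias cancellation: if `I h = E[Y_h]` admits a weak
error expansion of order `R` and the weights `w` solve the Vandermonde system, then
the extrapolated bias is of order `h^{αR}` with leading coefficient
`c_R (-1)^{R-1} / (∏ n_i)^α`. -/
theorem multistep_bias_expansion (α : ℝ) (hα : 0 < α) (R : ℕ) (hR : 1 ≤ R)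
    (n : ℕ → ℕ) (hn0 : n 0 = 1) (hmono : ∀ i j, i < j → j < R → n i < n j)
    (I : ℝ → ℝ) (I0 : ℝ) (c : ℕ → ℝ) (hcR : c R ≠ 0) (η : ℝ → ℝ)
    (hη : Tendsto η (nhdsWithin 0 (Set.Ioi 0)) (nhds 0))
    (hI : ∀ h : ℝ, 0 < h →
      I h = I0 + (∑ k ∈ Icc 1 R, c k * h ^ (α * k)) + h ^ (α * R) * η h)
    (w : ℕ → ℝ)
    (hw : ∀ k < R,
      ∑ i ∈ range R, w i * (n i : ℝ) ^ (-(α * k)) = if k = 0 then 1 else 0) :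
    ∃ η' : ℝ → ℝ, Tendsto η' (nhdsWithin 0 (Set.Ioi 0)) (nhds 0) ∧
      ∀ h : ℝ, 0 < h →
        ∑ i ∈ range R, w i * I (h / (n i : ℝ)) =
          I0 + c R * ((-1 : ℝ) ^ (R - 1) / (∏ i ∈ range R, (n i : ℝ)) ^ α) *
            h ^ (α * R) * (1 + η' h) := by
  have hnpos : ∀ i, i < R → 0 < (n i : ℝ) := by
    intro i hi
    have : 0 < n i := by
      rcases Nat.eq_zero_or_pos i with h0 | h0
      · rw [h0, hn0]; omega
      · have := hmono 0 i h0 hi; omega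
    exact_mod_cast this
  set x : ℕ → ℝ := fun i => (n i : ℝ) ^ (-α) with hx
  have hxpow : ∀ i, i < R → ∀ k : ℕ, x i ^ k = (n i : ℝ) ^ (-(α * k)) := by
    intro i hi k
    rw [hx]
    simp only
    rw [← Real.rpow_natCast ((n i : ℝ) ^ (-α)) k, ← Real.rpow_mul (hnpos i hi).le]
    congr 1
    ring
  have hw' : ∀ k < R, ∑ i ∈ range R, w i * x i ^ k = if k = 0 then 1 else 0 := by
    intro k hk
    rw [Finset.sum_congr rfl fun i hi => by rw [hxpow i (mem_range.mp hi) k]]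
    exact hw k hk
  have hprodpos : 0 < ∏ i ∈ range R, (n i : ℝ) :=
    Finset.prod_pos fun i hi => hnpos i (mem_range.mp hi)
  set K : ℝ := (-1 : ℝ) ^ (R - 1) / (∏ i ∈ range R, (n i : ℝ)) ^ α with hK
  have hSK : ∑ i ∈ range R, w i * (n i : ℝ) ^ (-(α * R)) = K := by
    have hS := vand_powR R hR w x hw'
    rw [Finset.sum_congr rfl fun i hi => by rw [hxpow i (mem_range.mp hi) R]] at hS
    rw [hS, hK]
    have hprod : ∏ i ∈ range R, x i = (∏ i ∈ range R, (n i : ℝ)) ^ (-α) := by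
      rw [hx, ← Real.finset_prod_rpow _ _ (fun i hi => (hnpos i (mem_range.mp hi)).le)]
    rw [hprod, Real.rpow_neg hprodpos.le, div_eq_mul_inv]
  have hK0 : K ≠ 0 := by
    rw [hK]
    exact div_ne_zero (pow_ne_zero _ (by norm_num))
      (ne_of_gt (Real.rpow_pos_of_pos hprodpos α))
  have hw0 : ∑ i ∈ range R, w i = 1 := by
    have := hw 0 (by omega)
    simpa using this
  set T : ℝ → ℝ := fun h => ∑ i ∈ range R, w i * (n i : ℝ) ^ (-(α * R)) * η (h / (n i : ℝ))
    with hT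
  refine ⟨fun h => T h / (c R * K), ?_, ?_⟩
  · have hTt : Tendsto T (nhdsWithin 0 (Set.Ioi 0))
        (nhds (∑ i ∈ range R, w i * (n i : ℝ) ^ (-(α * R)) * 0)) := by
      apply tendsto_finset_sum
      intro i hi
      apply Tendsto.const_mul
      apply hη.comp
      rw [tendsto_nhdsWithin_iff]
      constructor
      · have : Tendsto (fun h : ℝ => h / (n i : ℝ)) (nhds 0) (nhds (0 / (n i : ℝ))) :=
          (continuous_id.div_const _).tendsto 0
        simpa using this.mono_left nhdsWithin_le_nhds
      · filter_upwards [self_mem_nhdsWithin] with h hh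
        exact div_pos hh (hnpos i (mem_range.mp hi))
    have := hTt.div_const (c R * K)
    simpa using this
  · intro h hh
    have hdiv : ∀ i, i < R → ∀ β : ℝ, (h / (n i : ℝ)) ^ β = h ^ β * (n i : ℝ) ^ (-β) := by
      intro i hi β
      rw [Real.div_rpow hh.le (hnpos i hi).le, Real.rpow_neg (hnpos i hi).le, div_eq_mul_inv]
    have step1 : ∑ i ∈ range R, w i * I (h / (n i : ℝ)) =
        ∑ i ∈ range R, (w i * I0
          + ∑ k ∈ Icc 1 R, c k * h ^ (α * k) * (w i * (n i : ℝ) ^ (-(α * k)))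
          + h ^ (α * R) * (w i * (n i : ℝ) ^ (-(α * R)) * η (h / (n i : ℝ)))) := by
      refine Finset.sum_congr rfl fun i hi => ?_
      have hi' := mem_range.mp hi
      rw [hI (h / (n i : ℝ)) (div_pos hh (hnpos i hi'))]
      rw [hdiv i hi' (α * R)]
      rw [Finset.sum_congr rfl fun k _ => by rw [hdiv i hi' (α * k)]]
      rw [mul_add, mul_add, Finset.mul_sum]
      congr 1
      · congr 1
        exact Finset.sum_congr rfl fun k _ => by ring
      · ring
    rw [step1, Finset.sum_add_distrib, Finset.sum_add_distrib, ← Finset.sum_mul, hw0, one_mul,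
      ← Finset.mul_sum, Finset.sum_comm]
    have step2 : ∑ k ∈ Icc 1 R, ∑ i ∈ range R,
        c k * h ^ (α * k) * (w i * (n i : ℝ) ^ (-(α * k))) = c R * h ^ (α * R) * K := by
      rw [Finset.sum_congr rfl fun k _ => by rw [← Finset.mul_sum]]
      rw [← Finset.Ico_add_one_right_eq_Icc, Finset.sum_Ico_succ_top hR, hSK]
      have : ∀ k ∈ Finset.Ico 1 R,
          c k * h ^ (α * k) * ∑ i ∈ range R, w i * (n i : ℝ) ^ (-(α * k)) = 0 := by
        intro k hk
        obtain ⟨hk1, hk2⟩ := Finset.mem_Ico.mp hk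
        rw [hw k hk2, if_neg (by omega), mul_zero]
      rw [Finset.sum_congr rfl this, Finset.sum_const_zero, zero_add]
    rw [step2]
    have hcK : c R * K ≠ 0 := mul_ne_zero hcR hK0
    have hbeta : (fun h => T h / (c R * K)) h =
        (∑ i ∈ range R, w i * (n i : ℝ) ^ (-(α * R)) * η (h / (n i : ℝ))) / (c R * K) := rfl
    rw [hbeta]
    field_simp
    ring
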